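/- arXiv:1801.06872 — 2 statements merged into one kernel-verified Lean document; each statement's English description precedes it below -/
import Mathlib

section
/- Let f : ℝ → ℝ be continuous with t·f(t) > 0 for t ≠ 0 and limsup_{|t|→∞}|f(t)|/|t|^q < ∞ for some q > 1, and set r = (q+1)/q. Fix δ ∈ (0,1) and define j(t) = f(t) if |t| ≥ δ and 0 otherwise. Then there exists c > 0 such that |j(t)|^r ≤ c·t·f(t) for all t ∈ ℝ. -/
/-- the tail part `j = f·(1-χ_{(-δ,δ)})` satisfies `|j(t)|^r ≤ c t f(t)`. -/
theorem stmt_2 (f : ℝ → ℝ) (q : ℝ) (hq : 1 < q)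
    (hf : Continuous f)
    (hsign : ∀ t : ℝ, t ≠ 0 → 0 < t * f t)
    (hinf : ∃ M T : ℝ, 0 < T ∧ ∀ t : ℝ, T ≤ |t| → |f t| ≤ M * |t| ^ q)
    (r : ℝ) (hr : r = (q + 1) / q)
    (δ : ℝ) (hδ : 0 < δ ∧ δ < 1)
    (j : ℝ → ℝ) (hj : ∀ t, j t = if δ ≤ |t| then f t else 0) :
    ∃ c > (0 : ℝ), ∀ t : ℝ, |j t| ^ r ≤ c * (t * f t) := by
  obtain ⟨hδ0, hδ1⟩ := hδ
  obtain ⟨M, T, hT, hM⟩ := hinf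
  have hq0 : (0:ℝ) < q := lt_trans one_pos hq
  have hrpos : 0 < r := by rw [hr]; positivity
  have hr1 : r = 1 + 1/q := by rw [hr]; field_simp
  set T' := max T δ with hT'def
  have hδT' : δ ≤ T' := le_max_right _ _
  set M' := max M 1 with hM'def
  have hM'1 : (1:ℝ) ≤ M' := le_max_right _ _
  have hM'0 : (0:ℝ) < M' := lt_of_lt_of_le one_pos hM'1
  -- tail bound
  have tail : ∀ t : ℝ, T' ≤ |t| → |f t| ^ r ≤ M' ^ (1/q) * (t * f t) := by
    intro t ht
    have htne : t ≠ 0 := by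
      intro h
      rw [h, abs_zero] at ht
      linarith
    have hpos : 0 < t * f t := hsign t htne
    have hfabs : 0 < |f t| := by
      rcases eq_or_ne (f t) 0 with h | h
      · exfalso; rw [h, mul_zero] at hpos; exact lt_irrefl _ hpos
      · exact abs_pos.mpr h
    have htft : t * f t = |t| * |f t| := by
      rw [← abs_mul]; exact (abs_of_pos hpos).symm
    have hbound : |f t| ≤ M' * |t| ^ q := by
      calc |f t| ≤ M * |t| ^ q := hM t (le_trans (le_max_left _ _) ht)
        _ ≤ M' * |t| ^ q := by
            apply mul_le_mul_of_nonneg_right (le_max_left _ _)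
            positivity
    have h1 : |f t| ^ (1/q) ≤ M' ^ (1/q) * |t| := by
      have h2 := Real.rpow_le_rpow (abs_nonneg _) hbound (by positivity : (0:ℝ) ≤ 1/q)
      have h3 : (|t| ^ q) ^ (1/q) = |t| := by
        rw [← Real.rpow_mul (abs_nonneg t), mul_one_div, div_self (ne_of_gt hq0),
          Real.rpow_one]
      rwa [Real.mul_rpow hM'0.le (by positivity), h3] at h2
    calc |f t| ^ r = |f t| ^ (1:ℝ) * |f t| ^ (1/q) := by
          rw [← Real.rpow_add hfabs, ← hr1]
      _ = |f t| * |f t| ^ (1/q) := by rw [Real.rpow_one]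
      _ ≤ |f t| * (M' ^ (1/q) * |t|) := by
          exact mul_le_mul_of_nonneg_left h1 (abs_nonneg _)
      _ = M' ^ (1/q) * (t * f t) := by rw [htft]; ring
  -- compact part
  set K := Set.Icc (-T') T' ∩ {t : ℝ | δ ≤ |t|} with hKdef
  have hKc : IsCompact K :=
    isCompact_Icc.inter_right (isClosed_le continuous_const continuous_abs)
  have hKne : K.Nonempty := by
    refine ⟨δ, ⟨⟨by linarith, hδT'⟩, ?_⟩⟩
    simp [abs_of_pos hδ0]
  obtain ⟨t0, ht0K, ht0min⟩ := hKc.exists_isMinOn hKne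
    ((continuous_id.mul hf).continuousOn)
  obtain ⟨t1, ht1K, ht1max⟩ := hKc.exists_isMaxOn hKne
    ((hf.abs.rpow_const (fun x => Or.inr hrpos.le)).continuousOn)
  have ht0ne : t0 ≠ 0 := by
    intro h
    have := ht0K.2
    rw [h] at this
    simp at this
    linarith
  have hm : 0 < t0 * f t0 := hsign t0 ht0ne
  have hC0 : 0 ≤ |f t1| ^ r := Real.rpow_nonneg (abs_nonneg _) r
  refine ⟨max (M' ^ (1/q)) (|f t1| ^ r / (t0 * f t0)), ?_, ?_⟩
  · exact lt_of_lt_of_le (Real.rpow_pos_of_pos hM'0 _) (le_max_left _ _)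
  intro t
  rcases lt_or_ge |t| δ with h | h
  · rw [hj t, if_neg (not_le.mpr h), abs_zero, Real.zero_rpow (ne_of_gt hrpos)]
    rcases eq_or_ne t 0 with rfl | hne
    · simp
    · have := hsign t hne
      have hc : 0 < max (M' ^ (1/q)) (|f t1| ^ r / (t0 * f t0)) :=
        lt_of_lt_of_le (Real.rpow_pos_of_pos hM'0 _) (le_max_left _ _)
      positivity
  · rw [hj t, if_pos h]
    rcases le_or_gt |t| T' with h2 | h2
    · have htK : t ∈ K := ⟨abs_le.mp h2 |>.imp id id |> fun _ => ⟨(abs_le.mp h2).1, (abs_le.mp h2).2⟩, h⟩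
      have hmax : |f t| ^ r ≤ |f t1| ^ r := ht1max htK
      have hmin : t0 * f t0 ≤ t * f t := ht0min htK
      have htft : 0 < t * f t := lt_of_lt_of_le hm hmin
      calc |f t| ^ r ≤ |f t1| ^ r := hmax
        _ = |f t1| ^ r / (t0 * f t0) * (t0 * f t0) := by rw [div_mul_cancel₀ _ hm.ne']
        _ ≤ |f t1| ^ r / (t0 * f t0) * (t * f t) := by
            apply mul_le_mul_of_nonneg_left hmin (by positivity)
        _ ≤ max (M' ^ (1/q)) (|f t1| ^ r / (t0 * f t0)) * (t * f t) := by
            apply mul_le_mul_of_nonneg_right (le_max_right _ _) htft.le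
    · have := tail t h2.le
      have htne : t ≠ 0 := by
        intro hh; rw [hh, abs_zero] at h2; linarith
      have htft : 0 < t * f t := hsign t htne
      calc |f t| ^ r ≤ M' ^ (1/q) * (t * f t) := this
        _ ≤ max (M' ^ (1/q)) (|f t1| ^ r / (t0 * f t0)) * (t * f t) := by
            apply mul_le_mul_of_nonneg_right (le_max_left _ _) htft.le
end

section
/- Let f : ℝ → ℝ be continuous with t ↦ f(t)/t increasing on (0,∞) and decreasing on (−∞,0), and let F(t) = ∫₀ᵗ f(s) ds. Then the map t ↦ (1/2) f(t) t − F(t) is nonnegative and nondecreasing in |t|; in particular (1/2) f(t) t − F(t) ≥ 0 for all t. -/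
open MeasureTheory intervalIntegral

lemma ae_ne_zero (s t : ℝ) :
    ∀ᵐ u ∂(volume.restrict (Set.Icc s t)), u ≠ (0:ℝ) := by
  refine ae_restrict_of_ae ?_
  refine mem_ae_iff.mpr ?_
  have : {u : ℝ | u ≠ 0}ᶜ = {(0:ℝ)} := by ext u; simp
  rw [this]; exact measure_singleton 0

lemma pos_step (f : ℝ → ℝ) (hf : Continuous f)
    (hmono : MonotoneOn (fun t => f t / t) (Set.Ioi (0 : ℝ)))
    (s t : ℝ) (hs : 0 ≤ s) (hst : s ≤ t) :
    (1/2)*(f s * s) - ∫ u in (0:ℝ)..s, f u ≤ (1/2)*(f t * t) - ∫ u in (0:ℝ)..t, f u := by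
  rcases eq_or_lt_of_le (hs.trans hst) with h0 | ht
  · have : s = 0 := le_antisymm (h0 ▸ hst) hs
    rw [← h0, ← this]
  · -- 0 < t
    set c := f t / t with hc
    have hct : c * t = f t := div_mul_cancel₀ _ (ne_of_gt ht)
    have hintf : IntervalIntegrable f volume s t := hf.intervalIntegrable s t
    have hintg : IntervalIntegrable (fun u => c * u) volume s t :=
      (continuous_const.mul continuous_id).intervalIntegrable s t
    have hae : ∀ᵐ u ∂(volume.restrict (Set.Icc s t)), f u ≤ c * u := by
      filter_upwards [ae_ne_zero s t, ae_restrict_mem measurableSet_Icc] with u hu hmem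
      have hu0 : 0 < u := lt_of_le_of_ne (hs.trans hmem.1) (Ne.symm hu)
      have := hmono (Set.mem_Ioi.mpr hu0) (Set.mem_Ioi.mpr ht) hmem.2
      calc f u = (f u / u) * u := (div_mul_cancel₀ _ (ne_of_gt hu0)).symm
        _ ≤ c * u := mul_le_mul_of_nonneg_right this hu0.le
    have hI : ∫ u in s..t, f u ≤ c * ((t^2 - s^2)/2) := by
      have := integral_mono_ae_restrict hst hintf hintg hae
      rwa [intervalIntegral.integral_const_mul, integral_id] at this
    have hsplit : (∫ u in (0:ℝ)..t, f u) = (∫ u in (0:ℝ)..s, f u) + ∫ u in s..t, f u :=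
      (integral_add_adjacent_intervals (hf.intervalIntegrable 0 s) hintf).symm
    have hfs : f s * s ≤ c * s^2 := by
      rcases eq_or_lt_of_le hs with h | h
      · simp [← h]
      · have := hmono (Set.mem_Ioi.mpr h) (Set.mem_Ioi.mpr ht) hst
        have hss : (f s / s) * s = f s := div_mul_cancel₀ _ (ne_of_gt h)
        nlinarith [sq_nonneg s]
    rw [hsplit]
    nlinarith [hI, hfs, hct]

lemma neg_step (f : ℝ → ℝ) (hf : Continuous f)
    (hanti : AntitoneOn (fun t => f t / t) (Set.Iio (0 : ℝ)))
    (s t : ℝ) (hts : t ≤ s) (hs : s ≤ 0) :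
    (1/2)*(f s * s) - ∫ u in (0:ℝ)..s, f u ≤ (1/2)*(f t * t) - ∫ u in (0:ℝ)..t, f u := by
  rcases eq_or_lt_of_le (hts.trans hs) with h0 | ht
  · have : s = 0 := le_antisymm hs (by rw [← h0]; exact hts)
    rw [h0, this]
  · -- t < 0
    set c := f t / t with hc
    have hct : c * t = f t := div_mul_cancel₀ _ (ne_of_lt ht)
    have hintf : IntervalIntegrable f volume t s := hf.intervalIntegrable t s
    have hintg : IntervalIntegrable (fun u => c * u) volume t s :=
      (continuous_const.mul continuous_id).intervalIntegrable t s
    have hae : ∀ᵐ u ∂(volume.restrict (Set.Icc t s)), c * u ≤ f u := by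
      filter_upwards [ae_ne_zero t s, ae_restrict_mem measurableSet_Icc] with u hu hmem
      have hu0 : u < 0 := lt_of_le_of_ne (hmem.2.trans hs) hu
      have := hanti (Set.mem_Iio.mpr ht) (Set.mem_Iio.mpr hu0) hmem.1
      calc c * u ≤ (f u / u) * u := by
            exact mul_le_mul_of_nonpos_right this hu0.le
        _ = f u := div_mul_cancel₀ _ (ne_of_lt hu0)
    have hI : c * ((s^2 - t^2)/2) ≤ ∫ u in t..s, f u := by
      have := integral_mono_ae_restrict hts hintg hintf hae
      rwa [intervalIntegral.integral_const_mul, integral_id] at this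
    have hsplit : (∫ u in (0:ℝ)..s, f u) = (∫ u in (0:ℝ)..t, f u) + ∫ u in t..s, f u :=
      (integral_add_adjacent_intervals (hf.intervalIntegrable 0 t) hintf).symm
    have hfs : f s * s ≤ c * s^2 := by
      rcases eq_or_lt_of_le hs with h | h
      · simp [h]
      · have := hanti (Set.mem_Iio.mpr ht) (Set.mem_Iio.mpr h) hts
        have hss : (f s / s) * s = f s := div_mul_cancel₀ _ (ne_of_lt h)
        nlinarith [sq_nonneg s]
    rw [hsplit]
    nlinarith [hI, hfs, hct]

/-- under (f₃), `t ↦ (1/2) f(t) t − F(t)` is nonnegative and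
nondecreasing in `|t|`. -/
theorem stmt_12 (f : ℝ → ℝ) (hf : Continuous f)
    (hmono : MonotoneOn (fun t => f t / t) (Set.Ioi (0 : ℝ)))
    (hanti : AntitoneOn (fun t => f t / t) (Set.Iio (0 : ℝ)))
    (F : ℝ → ℝ) (hF : ∀ t, F t = ∫ s in (0 : ℝ)..t, f s) :
    (∀ t : ℝ, 0 ≤ (1 / 2) * (f t * t) - F t) ∧
    (∀ s t : ℝ, 0 ≤ s → s ≤ t →
      (1 / 2) * (f s * s) - F s ≤ (1 / 2) * (f t * t) - F t) ∧
    (∀ s t : ℝ, t ≤ s → s ≤ 0 →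
      (1 / 2) * (f s * s) - F s ≤ (1 / 2) * (f t * t) - F t) := by
  have hpos : ∀ s t : ℝ, 0 ≤ s → s ≤ t →
      (1 / 2) * (f s * s) - F s ≤ (1 / 2) * (f t * t) - F t := by
    intro s t hs hst
    rw [hF s, hF t]
    exact pos_step f hf hmono s t hs hst
  have hneg : ∀ s t : ℝ, t ≤ s → s ≤ 0 →
      (1 / 2) * (f s * s) - F s ≤ (1 / 2) * (f t * t) - F t := by
    intro s t hts hs
    rw [hF s, hF t]
    exact neg_step f hf hanti s t hts hs
  refine ⟨?_, hpos, hneg⟩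
  intro t
  have h0 : (1 / 2) * (f 0 * 0) - F 0 = 0 := by
    rw [hF 0]; simp
  rcases le_total 0 t with h | h
  · have := hpos 0 t le_rfl h; linarith
  · have := hneg 0 t h le_rfl; linarith
end
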